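/- arXiv:2002.03257 — 2 statements merged into one kernel-verified Lean document; each statement's English description precedes it below -/
import Mathlib

section
/- Let p ≥ 1 be an integer, q = p² - p + 1, and let P ⊂ ℝ² be the pentagon with vertices (q,0), (-q,0), (q-1,1), (-(q-1),1), (0, q/p). Then ehr_P(t) ≡ -ehr_ℓ(t), where ℓ = [-1/p,0]; that is, ehr_P(k) + ehr_ℓ(k) is a polynomial function of k. -/
open Set Pointwise

noncomputable section

/-- Number of lattice points in the `k`-th dilate of `Q ⊆ ℝ^n`. -/
def ehr {n : ℕ} (Q : Set (Fin n → ℝ)) (k : ℕ) : ℕ :=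
  {x : Fin n → ℤ | (fun i => (x i : ℝ)) ∈ (k : ℝ) • Q}.ncard

/-- `Q` is a rational polytope: the convex hull of finitely many rational points. -/
def IsRatPolytope {n : ℕ} (Q : Set (Fin n → ℝ)) : Prop :=
  ∃ V : Finset (Fin n → ℚ), Q = convexHull ℝ ((fun (v : Fin n → ℚ) (i : Fin n) => ((v i : ℚ) : ℝ)) '' (V : Set (Fin n → ℚ)))

/-- `Q` is an integral polytope: the convex hull of finitely many integer points. -/
def IsIntPolytope {n : ℕ} (Q : Set (Fin n → ℝ)) : Prop :=
  ∃ V : Finset (Fin n → ℤ), Q = convexHull ℝ ((fun (v : Fin n → ℤ) (i : Fin n) => ((v i : ℤ) : ℝ)) '' (V : Set (Fin n → ℤ)))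

/-- `p` is a period of `c`. -/
def IsPeriodOf (c : ℤ → ℚ) (p : ℕ) : Prop := 0 < p ∧ ∀ k : ℤ, c (k + p) = c k

/-- `p` is the minimum period of `c`. -/
def IsMinPeriod (c : ℤ → ℚ) (p : ℕ) : Prop :=
  IsPeriodOf c p ∧ ∀ m : ℕ, IsPeriodOf c m → p ≤ m

/-- standard basis vector -/
def stdb {n : ℕ} (j : Fin n) : Fin n → ℝ := fun j' => if j' = j then 1 else 0

/-- The pyramid over a polytope. -/
def pyr {d : ℕ} (Q : Set (Fin d → ℝ)) : Set (Fin (d + 1) → ℝ) :=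
  convexHull ℝ ((fun x : Fin d → ℝ => Fin.snoc x (0 : ℝ)) '' Q ∪ {Fin.snoc (0 : Fin d → ℝ) 1})

/-- The `i`-fold pyramid. -/
def pyrIter {d : ℕ} : (i : ℕ) → Set (Fin d → ℝ) → Set (Fin (d + i) → ℝ)
  | 0, Q => Q
  | (i + 1), Q => pyr (pyrIter i Q)

/-- The segment `ℓ = [-1/p, 0] ⊆ ℝ^1`. -/
def seg (p : ℕ) : Set (Fin 1 → ℝ) := convexHull ℝ {(fun _ => -(1 / (p : ℝ))), 0}

/-- The pentagon with vertices `(±q,0)`, `(±(q-1),1)`, `(0,q/p)`, where `q = p² - p + 1`. -/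
def pent (p : ℕ) : Set (Fin 2 → ℝ) :=
  convexHull ℝ {![(p : ℝ)^2 - p + 1, 0], ![-((p : ℝ)^2 - p + 1), 0],
    ![(p : ℝ)^2 - p + 1 - 1, 1], ![-((p : ℝ)^2 - p + 1 - 1), 1],
    ![0, ((p : ℝ)^2 - p + 1) / p]}

/-- Cartesian product of subsets of `ℝ^a` and `ℝ^b`, inside `ℝ^(a+b)`. -/
def prodSet {a b : ℕ} (A : Set (Fin a → ℝ)) (B : Set (Fin b → ℝ)) : Set (Fin (a + b) → ℝ) :=
  {x | (fun j => x (Fin.castAdd b j)) ∈ A ∧ (fun j => x (Fin.natAdd a j)) ∈ B}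

/-- Transport a subset of `ℝ^m` to `ℝ^n` along a proof `m = n`. -/
def castSet {m n : ℕ} (h : m = n) (S : Set (Fin m → ℝ)) : Set (Fin n → ℝ) :=
  {x | (x ∘ Fin.cast h) ∈ S}

/-- Translate of a set. -/
def transl {n : ℕ} (v : Fin n → ℝ) (S : Set (Fin n → ℝ)) : Set (Fin n → ℝ) :=
  (fun x => x + v) '' S

/-- The cyclic polytope `C_i = conv{(t, t², …, t^i) : t ∈ T}`. -/
def cyc (T : Finset ℤ) (i : ℕ) : Set (Fin i → ℝ) :=
  convexHull ℝ ((fun t : ℤ => fun j : Fin i => (t : ℝ) ^ ((j : ℕ) + 1)) '' ↑T)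

/-- Euclidean volume. -/
def vol {i : ℕ} (S : Set (Fin i → ℝ)) : ℝ := (MeasureTheory.volume S).toReal

/-- `q : ℤ → ℚ` is a quasi-polynomial: `q k = ∑ cᵢ(k) kⁱ` with periodic coefficients. -/
def IsQuasiPoly (q : ℤ → ℚ) : Prop :=
  ∃ (n : ℕ) (c : ℕ → ℤ → ℚ), (∀ i, ∃ p, IsPeriodOf (c i) p) ∧
    ∀ k : ℤ, q k = ∑ i ∈ Finset.range (n + 1), c i k * (k : ℚ) ^ i

/-- `F` is a facet of `Q`: a face cut out by a supporting hyperplane, of codimension 1. -/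
def IsFacet {n : ℕ} (Q F : Set (Fin n → ℝ)) : Prop :=
  (∃ (l : (Fin n → ℝ) →ₗ[ℝ] ℝ) (c : ℝ), (∀ x ∈ Q, l x ≤ c) ∧ F = {x ∈ Q | l x = c}) ∧
  Module.finrank ℝ ↥(vectorSpan ℝ F) + 1 = Module.finrank ℝ ↥(vectorSpan ℝ Q)

/-- A rational polytopal ball: a finite union of full-dimensional rational polytopes,
pairwise meeting in common facets, which is homeomorphic to a closed ball. -/
def IsPolytopalBall {n : ℕ} (Q : Set (Fin n → ℝ)) : Prop :=
  ∃ s : Finset (Set (Fin n → ℝ)),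
    Q = (⋃ P ∈ s, P) ∧
    (∀ P ∈ s, IsRatPolytope P ∧ affineSpan ℝ P = ⊤) ∧
    (∀ P ∈ s, ∀ P' ∈ s, P ≠ P' → (P ∩ P').Nonempty →
      IsFacet P (P ∩ P') ∧ IsFacet P' (P ∩ P')) ∧
    Nonempty (Q ≃ₜ (Metric.closedBall (0 : EuclideanSpace ℝ (Fin n)) 1 : Set (EuclideanSpace ℝ (Fin n))))
set_option maxHeartbeats 2000000

lemma seg_eq (p : ℕ) (hp : 1 ≤ p) :
    seg p = {v : Fin 1 → ℝ | -(1/(p:ℝ)) ≤ v 0 ∧ v 0 ≤ 0} := by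
  have hp0 : 0 < (p:ℝ) := by exact_mod_cast hp
  ext v
  rw [seg, convexHull_pair]
  constructor
  · rintro ⟨a, b, ha, hb, hab, h⟩
    have h0 := congrFun h 0
    simp only [Pi.add_apply, Pi.smul_apply, smul_eq_mul, Pi.zero_apply, mul_zero, add_zero] at h0
    have ha1 : a ≤ 1 := by linarith
    have hip : 0 ≤ 1/(p:ℝ) := by positivity
    constructor
    · rw [← h0]; nlinarith
    · rw [← h0]; nlinarith
  · rintro ⟨h1, h2⟩
    refine ⟨-(v 0) * p, 1 + v 0 * p, by nlinarith, ?_, by ring, ?_⟩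
    · have hh : -(1/(p:ℝ)) * p ≤ v 0 * p := mul_le_mul_of_nonneg_right h1 hp0.le
      have he : -(1/(p:ℝ)) * p = -1 := by field_simp
      rw [he] at hh; linarith
    · funext i
      have hi : i = 0 := Subsingleton.elim _ _
      subst hi
      simp only [Pi.add_apply, Pi.smul_apply, smul_eq_mul, Pi.zero_apply, mul_zero, add_zero]
      field_simp

lemma ehr_seg (p k : ℕ) (hp : 1 ≤ p) (hk : 0 < k) : ehr (seg p) k = k / p + 1 := by
  have hp0 : 0 < (p:ℝ) := by exact_mod_cast hp
  have hpz : 0 < (p:ℤ) := by exact_mod_cast hp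
  have hk0 : 0 < (k:ℝ) := by exact_mod_cast hk
  have hkne : (k:ℝ) ≠ 0 := ne_of_gt hk0
  have hcast : ((k / p : ℕ) : ℤ) = (k:ℤ) / (p:ℤ) := Int.natCast_ediv k p
  have hmem : ∀ x : Fin 1 → ℤ,
      ((fun i => (x i:ℝ)) ∈ (k:ℝ) • seg p) ↔ (-(((k/p : ℕ)):ℤ) ≤ x 0 ∧ x 0 ≤ 0) := by
    intro x
    rw [mem_smul_set_iff_inv_smul_mem₀ hkne, seg_eq p hp]
    simp only [mem_setOf_eq, Pi.smul_apply, smul_eq_mul]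
    have hinv : (k:ℝ) * ((k:ℝ)⁻¹ * (x 0:ℝ)) = (x 0:ℝ) := by field_simp
    constructor
    · rintro ⟨h1, h2⟩
      have e1 : (k:ℝ) * (-(1/(p:ℝ))) ≤ (k:ℝ) * ((k:ℝ)⁻¹ * (x 0:ℝ)) :=
        mul_le_mul_of_nonneg_left h1 hk0.le
      rw [hinv] at e1
      have e2 : -(k:ℝ) ≤ (x 0:ℝ) * p := by
        have := mul_le_mul_of_nonneg_right e1 hp0.le
        calc -(k:ℝ) = (k:ℝ) * (-(1/(p:ℝ))) * p := by field_simp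
        _ ≤ (x 0:ℝ) * p := this
      have e2' : -(k:ℤ) ≤ x 0 * p := by exact_mod_cast e2
      have e3 : -(x 0) ≤ (k:ℤ) / (p:ℤ) := (Int.le_ediv_iff_mul_le hpz).mpr (by linarith)
      have e4 : (x 0:ℝ) ≤ 0 := by nlinarith
      refine ⟨by rw [hcast]; linarith, by exact_mod_cast e4⟩
    · rintro ⟨h1, h2⟩
      rw [hcast] at h1
      have e3 : -(x 0) * p ≤ (k:ℤ) := (Int.le_ediv_iff_mul_le hpz).mp (by linarith)
      have e3' : -((x 0:ℝ)) * p ≤ (k:ℝ) := by exact_mod_cast e3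
      have h2' : (x 0 : ℝ) ≤ 0 := by exact_mod_cast h2
      constructor
      · rw [neg_le, ← mul_neg]
        rw [le_div_iff₀ hp0] at *
        calc (k:ℝ)⁻¹ * -(x 0:ℝ) * p = (k:ℝ)⁻¹ * (-(x 0:ℝ) * p) := by ring
        _ ≤ (k:ℝ)⁻¹ * k := by
            apply mul_le_mul_of_nonneg_left e3' (by positivity)
        _ = 1 := by field_simp
      · have : 0 ≤ (k:ℝ)⁻¹ := by positivity
        nlinarith
  have hset : {x : Fin 1 → ℤ | (fun i => (x i:ℝ)) ∈ (k:ℝ) • seg p} =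
      (fun z : ℤ => (fun _ : Fin 1 => z)) '' ↑(Finset.Icc (-(((k/p : ℕ)):ℤ)) 0) := by
    ext x
    simp only [mem_setOf_eq, hmem, Set.mem_image, Finset.coe_Icc, Set.mem_Icc]
    constructor
    · rintro ⟨h1, h2⟩
      exact ⟨x 0, ⟨h1, h2⟩, by funext i; congr 1; exact Subsingleton.elim _ _⟩
    · rintro ⟨z, ⟨h1, h2⟩, rfl⟩
      exact ⟨h1, h2⟩
  rw [ehr, hset, Set.ncard_image_of_injective _ (fun a b h => congrFun h 0),
    Set.ncard_coe_finset, Int.card_Icc]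
  generalize k / p = t
  omega

lemma convex_lin {α β γ x0 x1 y0 y1 a b : ℝ} (hx : α*x0 + β*x1 ≤ γ)
    (hy : α*y0 + β*y1 ≤ γ) (ha : 0 ≤ a) (hb : 0 ≤ b) (hab : a + b = 1) :
    α*(a*x0 + b*y0) + β*(a*x1 + b*y1) ≤ γ := by
  calc α*(a*x0 + b*y0) + β*(a*x1 + b*y1)
      = a*(α*x0 + β*x1) + b*(α*y0 + β*y1) := by ring
    _ ≤ a*γ + b*γ :=
      add_le_add (mul_le_mul_of_nonneg_left hx ha) (mul_le_mul_of_nonneg_left hy hb)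
    _ = (a+b)*γ := by ring
    _ = γ := by rw [hab, one_mul]

lemma pent_sub_H (p : ℕ) (hp : 1 ≤ p) :
    pent p ⊆ {v : Fin 2 → ℝ | 0 ≤ v 1 ∧ v 0 + v 1 ≤ (p:ℝ)^2 - p + 1 ∧
      -(v 0) + v 1 ≤ (p:ℝ)^2 - p + 1 ∧
      ((p:ℝ)-1) * v 0 + (p:ℝ)^2 * v 1 ≤ (p:ℝ)*((p:ℝ)^2 - p + 1) ∧
      -((p:ℝ)-1) * v 0 + (p:ℝ)^2 * v 1 ≤ (p:ℝ)*((p:ℝ)^2 - p + 1)} := by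
  have hP : (1:ℝ) ≤ (p:ℝ) := by exact_mod_cast hp
  have hP0 : (0:ℝ) < (p:ℝ) := by linarith
  have hQ1 : (1:ℝ) ≤ (p:ℝ)^2 - p + 1 := by nlinarith
  apply convexHull_min
  · intro u hu
    simp only [Set.mem_insert_iff, Set.mem_singleton_iff] at hu
    have hQp : (p:ℝ)^2 * (((p:ℝ)^2 - p + 1)/p) = p * ((p:ℝ)^2 - p + 1) := by
      field_simp
    have hQp2 : (0:ℝ) ≤ ((p:ℝ)^2 - p + 1) / p := div_nonneg (by linarith) hP0.le
    have hQp3 : ((p:ℝ)^2 - p + 1) / p ≤ (p:ℝ)^2 - p + 1 := by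
      rw [div_le_iff₀ hP0]
      nlinarith [mul_le_mul_of_nonneg_left hP (by linarith : (0:ℝ) ≤ (p:ℝ)^2 - p + 1)]
    have hkey : (0:ℝ) ≤ (p:ℝ) * ((p:ℝ) - 1)^2 := mul_nonneg hP0.le (sq_nonneg _)
    rcases hu with rfl | rfl | rfl | rfl | rfl <;>
      refine ⟨?_, ?_, ?_, ?_, ?_⟩ <;>
      simp only [Matrix.cons_val_zero, Matrix.cons_val_one, Matrix.head_cons] <;>
      nlinarith
  · rintro x hx y hy a b ha hb hab
    obtain ⟨hx1, hx2, hx3, hx4, hx5⟩ := hx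
    obtain ⟨hy1, hy2, hy3, hy4, hy5⟩ := hy
    refine ⟨?_, ?_, ?_, ?_, ?_⟩ <;>
      simp only [Pi.add_apply, Pi.smul_apply, smul_eq_mul]
    · exact add_nonneg (mul_nonneg ha hx1) (mul_nonneg hb hy1)
    · have := convex_lin (α := 1) (β := 1) (by linarith : 1*x 0 + 1*x 1 ≤ (p:ℝ)^2-p+1)
        (by linarith : 1*y 0 + 1*y 1 ≤ (p:ℝ)^2-p+1) ha hb hab
      linarith
    · have := convex_lin (α := -1) (β := 1) (by linarith : -1*x 0 + 1*x 1 ≤ (p:ℝ)^2-p+1)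
        (by linarith : -1*y 0 + 1*y 1 ≤ (p:ℝ)^2-p+1) ha hb hab
      linarith
    · have := convex_lin hx4 hy4 ha hb hab
      linarith
    · have := convex_lin hx5 hy5 ha hb hab
      linarith

lemma vec2_smul_add (c1 c2 a1 a2 b1 b2 : ℝ) :
    c1 • (![a1,a2] : Fin 2 → ℝ) + c2 • ![b1,b2] = ![c1*a1+c2*b1, c1*a2+c2*b2] := by
  funext i; fin_cases i <;> simp
lemma vec2_eq {a1 a2 b1 b2 : ℝ} (h1 : a1 = b1) (h2 : a2 = b2) :
    (![a1,a2] : Fin 2 → ℝ) = ![b1,b2] := by rw [h1, h2]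
lemma vec2_expand (v : Fin 2 → ℝ) : v = ![v 0, v 1] := by
  funext i; fin_cases i <;> rfl

lemma H_sub_pent (p : ℕ) (hp : 1 ≤ p) :
    {v : Fin 2 → ℝ | 0 ≤ v 1 ∧ v 0 + v 1 ≤ (p:ℝ)^2 - p + 1 ∧
      -(v 0) + v 1 ≤ (p:ℝ)^2 - p + 1 ∧
      ((p:ℝ)-1) * v 0 + (p:ℝ)^2 * v 1 ≤ (p:ℝ)*((p:ℝ)^2 - p + 1) ∧
      -((p:ℝ)-1) * v 0 + (p:ℝ)^2 * v 1 ≤ (p:ℝ)*((p:ℝ)^2 - p + 1)} ⊆ pent p := by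
  have hP : (1:ℝ) ≤ (p:ℝ) := by exact_mod_cast hp
  have hP0 : (0:ℝ) < (p:ℝ) := by linarith
  set P : ℝ := (p:ℝ) with hPdef
  set Q : ℝ := (p:ℝ)^2 - p + 1 with hQdef
  have hQ1 : (1:ℝ) ≤ Q := by rw [hQdef]; nlinarith
  have hV1 : (![Q, 0] : Fin 2 → ℝ) ∈ pent p := subset_convexHull ℝ _ (by left; rfl)
  have hV2 : (![-Q, 0] : Fin 2 → ℝ) ∈ pent p := subset_convexHull ℝ _ (by right; left; rfl)
  have hV3 : (![Q - 1, 1] : Fin 2 → ℝ) ∈ pent p :=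
    subset_convexHull ℝ _ (by right; right; left; rfl)
  have hV4 : (![-(Q - 1), 1] : Fin 2 → ℝ) ∈ pent p :=
    subset_convexHull ℝ _ (by right; right; right; left; rfl)
  have hV5 : (![0, Q / P] : Fin 2 → ℝ) ∈ pent p :=
    subset_convexHull ℝ _ (by right; right; right; right; rfl)
  have hconv : Convex ℝ (pent p) := convex_convexHull ℝ _
  rintro v ⟨h0, h1, h2, h3, h4⟩
  by_cases hyle : v 1 ≤ 1
  · -- bottom trapezoid
    by_cases hQy : Q - v 1 ≤ 0
    · -- degenerate: v = ![Q-1, 1]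
      have hy1' : v 1 = 1 := by linarith
      have hQ1' : Q = 1 := by linarith
      have hx0 : v 0 = 0 := by nlinarith
      have hve : v = ![Q - 1, 1] := by
        rw [vec2_expand v]; exact vec2_eq (by linarith) hy1'
      rw [hve]; exact hV3
    · push_neg at hQy
      set t : ℝ := v 0 / (Q - v 1) with ht
      have htc : t * (Q - v 1) = v 0 := by rw [ht]; field_simp
      have ht1 : t ≤ 1 := by rw [ht, div_le_one hQy]; linarith
      have ht2 : -1 ≤ t := by rw [ht, le_div_iff₀ hQy]; linarith
      have hA : (![t * Q, 0] : Fin 2 → ℝ) ∈ pent p := by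
        apply hconv.segment_subset hV1 hV2
        refine ⟨(1+t)/2, (1-t)/2, by linarith, by linarith, by ring, ?_⟩
        rw [vec2_smul_add]; exact vec2_eq (by ring) (by ring)
      have hB : (![t * (Q - 1), 1] : Fin 2 → ℝ) ∈ pent p := by
        apply hconv.segment_subset hV3 hV4
        refine ⟨(1+t)/2, (1-t)/2, by linarith, by linarith, by ring, ?_⟩
        rw [vec2_smul_add]; exact vec2_eq (by ring) (by ring)
      apply hconv.segment_subset hA hB
      refine ⟨1 - v 1, v 1, by linarith, h0, by ring, ?_⟩
      rw [vec2_smul_add]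
      conv_rhs => rw [vec2_expand v]
      exact vec2_eq (by linear_combination htc) (by ring)
  · -- top triangle
    push_neg at hyle
    rcases Nat.lt_or_ge p 2 with hlt | hge
    · exfalso
      have hpe : p = 1 := by omega
      subst hpe
      rw [hPdef, hQdef] at h3
      norm_num at h3
      linarith
    have hP2 : (2:ℝ) ≤ P := by rw [hPdef]; exact_mod_cast hge
    have hQm1 : 0 < Q - 1 := by rw [hQdef, hPdef] at *; nlinarith
    have hQmP : 0 < Q - P := by rw [hQdef, hPdef] at *; nlinarith
    have hkey : (Q - 1)*(P-1) = P*(Q-P) := by rw [hQdef, hPdef]; ring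
    by_cases htop : Q - P * v 1 ≤ 0
    · -- apex
      have e1 : (P-1) * v 0 ≤ 0 := by nlinarith
      have e2 : 0 ≤ (P-1) * v 0 := by nlinarith
      have hx0 : v 0 = 0 := by nlinarith
      have hy_le : v 1 * P ≤ Q := by nlinarith
      have hy_ge : Q ≤ v 1 * P := by nlinarith
      have hy : v 1 = Q / P := by
        rw [eq_div_iff (ne_of_gt hP0)]; linarith
      have hve : v = ![0, Q / P] := by
        funext i; fin_cases i
        · exact hx0
        · exact hy
      rw [hve]; exact hV5
    · push_neg at htop
      set c1 : ℝ := (Q - P * v 1)/(Q - P) with hc1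
      set c2 : ℝ := (P * v 1 - P)/(Q - P) with hc2
      have hc1pos : 0 < c1 := div_pos htop hQmP
      have hc2nn : 0 ≤ c2 := div_nonneg (by nlinarith) hQmP.le
      have hc12 : c1 + c2 = 1 := by
        rw [hc1, hc2]; field_simp; ring
      have hc1ne : c1 ≠ 0 := ne_of_gt hc1pos
      set B0 : ℝ := v 0 / c1 with hB0
      have hc1Q : c1 * (Q - 1) = P * (Q - P * v 1) / (P - 1) := by
        rw [hc1, div_mul_eq_mul_div,
          div_eq_div_iff (ne_of_gt hQmP) (by linarith : P - 1 ≠ 0)]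
        linear_combination (Q - P * v 1) * hkey
      have hBub : B0 ≤ Q - 1 := by
        rw [hB0, div_le_iff₀ hc1pos, mul_comm (Q-1) c1, hc1Q,
          le_div_iff₀ (by linarith : (0:ℝ) < P - 1)]
        nlinarith
      have hBlb : -(Q - 1) ≤ B0 := by
        rw [hB0, le_div_iff₀ hc1pos]
        have h6 : -(Q - 1) * c1 = -(P * (Q - P * v 1) / (P - 1)) := by
          linear_combination -hc1Q
        have h7 : -(P * (Q - P * v 1) / (P - 1)) = (-(P * (Q - P * v 1))) / (P - 1) := by
          ring
        rw [h6, h7, div_le_iff₀ (by linarith : (0:ℝ) < P - 1)]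
        nlinarith
      set t' : ℝ := B0 / (Q - 1) with ht'
      have ht'1 : t' ≤ 1 := by rw [ht', div_le_one hQm1]; linarith
      have ht'2 : -1 ≤ t' := by rw [ht', le_div_iff₀ hQm1]; linarith
      have ht'c : t' * (Q - 1) = B0 := by rw [ht']; field_simp
      have hB : (![B0, 1] : Fin 2 → ℝ) ∈ pent p := by
        apply hconv.segment_subset hV3 hV4
        refine ⟨(1+t')/2, (1-t')/2, by linarith, by linarith, by ring, ?_⟩
        rw [vec2_smul_add]
        exact vec2_eq (by linear_combination ht'c) (by ring)
      apply hconv.segment_subset hB hV5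
      refine ⟨c1, c2, hc1pos.le, hc2nn, hc12, ?_⟩
      rw [vec2_smul_add]
      conv_rhs => rw [vec2_expand v]
      refine vec2_eq ?_ ?_
      · rw [hB0]; field_simp; ring
      · rw [hc1, hc2]
        field_simp
        ring


lemma pent_eq_H (p : ℕ) (hp : 1 ≤ p) :
    pent p = {v : Fin 2 → ℝ | 0 ≤ v 1 ∧ v 0 + v 1 ≤ (p:ℝ)^2 - p + 1 ∧
      -(v 0) + v 1 ≤ (p:ℝ)^2 - p + 1 ∧
      ((p:ℝ)-1) * v 0 + (p:ℝ)^2 * v 1 ≤ (p:ℝ)*((p:ℝ)^2 - p + 1) ∧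
      -((p:ℝ)-1) * v 0 + (p:ℝ)^2 * v 1 ≤ (p:ℝ)*((p:ℝ)^2 - p + 1)} :=
  Set.Subset.antisymm (pent_sub_H p hp) (H_sub_pent p hp)

lemma mem_dilate_H (p k : ℕ) (hp : 1 ≤ p) (hk : 0 < k) (u : Fin 2 → ℝ) :
    u ∈ (k:ℝ) • pent p ↔
      (0 ≤ u 1 ∧ u 0 + u 1 ≤ k*((p:ℝ)^2 - p + 1) ∧ -(u 0) + u 1 ≤ k*((p:ℝ)^2 - p + 1) ∧
       ((p:ℝ)-1) * u 0 + (p:ℝ)^2 * u 1 ≤ k*((p:ℝ)*((p:ℝ)^2 - p + 1)) ∧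
       -((p:ℝ)-1) * u 0 + (p:ℝ)^2 * u 1 ≤ k*((p:ℝ)*((p:ℝ)^2 - p + 1))) := by
  have hk0 : (0:ℝ) < (k:ℝ) := by exact_mod_cast hk
  have hkne : (k:ℝ) ≠ 0 := ne_of_gt hk0
  set Q : ℝ := (p:ℝ)^2 - p + 1 with hQdef
  constructor
  · rintro ⟨w, hw, hwe⟩
    rw [pent_eq_H p hp] at hw
    obtain ⟨h0, h1, h2, h3, h4⟩ := hw
    have e0 : (k:ℝ) * w 0 = u 0 := congrFun hwe 0
    have e1 : (k:ℝ) * w 1 = u 1 := congrFun hwe 1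
    refine ⟨?_, ?_, ?_, ?_, ?_⟩
    · rw [← e1]; exact mul_nonneg hk0.le h0
    · calc u 0 + u 1 = (k:ℝ) * (w 0 + w 1) := by rw [← e0, ← e1]; ring
        _ ≤ k * Q := mul_le_mul_of_nonneg_left h1 hk0.le
    · calc -(u 0) + u 1 = (k:ℝ) * (-(w 0) + w 1) := by rw [← e0, ← e1]; ring
        _ ≤ k * Q := mul_le_mul_of_nonneg_left h2 hk0.le
    · calc ((p:ℝ)-1) * u 0 + (p:ℝ)^2 * u 1
          = (k:ℝ) * (((p:ℝ)-1) * w 0 + (p:ℝ)^2 * w 1) := by rw [← e0, ← e1]; ring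
        _ ≤ k * ((p:ℝ)*Q) := mul_le_mul_of_nonneg_left h3 hk0.le
    · calc -((p:ℝ)-1) * u 0 + (p:ℝ)^2 * u 1
          = (k:ℝ) * (-((p:ℝ)-1) * w 0 + (p:ℝ)^2 * w 1) := by rw [← e0, ← e1]; ring
        _ ≤ k * ((p:ℝ)*Q) := mul_le_mul_of_nonneg_left h4 hk0.le
  · rintro ⟨h0, h1, h2, h3, h4⟩
    refine ⟨fun i => (k:ℝ)⁻¹ * u i, ?_, by funext i; simp; field_simp⟩
    rw [pent_eq_H p hp]
    have hinv : (0:ℝ) ≤ (k:ℝ)⁻¹ := by positivity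
    refine ⟨mul_nonneg hinv h0, ?_, ?_, ?_, ?_⟩
    · calc (k:ℝ)⁻¹ * u 0 + (k:ℝ)⁻¹ * u 1 = (u 0 + u 1) * (k:ℝ)⁻¹ := by ring
        _ ≤ (k * Q) * (k:ℝ)⁻¹ := mul_le_mul_of_nonneg_right h1 hinv
        _ = Q := by field_simp
    · calc -((k:ℝ)⁻¹ * u 0) + (k:ℝ)⁻¹ * u 1 = (-(u 0) + u 1) * (k:ℝ)⁻¹ := by ring
        _ ≤ (k * Q) * (k:ℝ)⁻¹ := mul_le_mul_of_nonneg_right h2 hinv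
        _ = Q := by field_simp
    · calc ((p:ℝ)-1) * ((k:ℝ)⁻¹ * u 0) + (p:ℝ)^2 * ((k:ℝ)⁻¹ * u 1)
          = (((p:ℝ)-1) * u 0 + (p:ℝ)^2 * u 1) * (k:ℝ)⁻¹ := by ring
        _ ≤ (k * ((p:ℝ)*Q)) * (k:ℝ)⁻¹ := mul_le_mul_of_nonneg_right h3 hinv
        _ = (p:ℝ)*Q := by field_simp
    · calc -((p:ℝ)-1) * ((k:ℝ)⁻¹ * u 0) + (p:ℝ)^2 * ((k:ℝ)⁻¹ * u 1)
          = (-((p:ℝ)-1) * u 0 + (p:ℝ)^2 * u 1) * (k:ℝ)⁻¹ := by ring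
        _ ≤ (k * ((p:ℝ)*Q)) * (k:ℝ)⁻¹ := mul_le_mul_of_nonneg_right h4 hinv
        _ = (p:ℝ)*Q := by field_simp

lemma mem_dilate_int (p k : ℕ) (hp : 1 ≤ p) (hk : 0 < k) (z : Fin 2 → ℤ) :
    ((fun i => (z i : ℝ)) ∈ (k:ℝ) • pent p) ↔
      (0 ≤ z 1 ∧ z 0 + z 1 ≤ k*((p:ℤ)^2 - p + 1) ∧ -(z 0) + z 1 ≤ k*((p:ℤ)^2 - p + 1) ∧
       ((p:ℤ)-1) * z 0 + (p:ℤ)^2 * z 1 ≤ k*((p:ℤ)*((p:ℤ)^2 - p + 1)) ∧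
       -((p:ℤ)-1) * z 0 + (p:ℤ)^2 * z 1 ≤ k*((p:ℤ)*((p:ℤ)^2 - p + 1))) := by
  rw [mem_dilate_H p k hp hk]
  constructor <;> rintro ⟨h0, h1, h2, h3, h4⟩ <;>
    refine ⟨by exact_mod_cast h0, by exact_mod_cast h1, by exact_mod_cast h2,
      by exact_mod_cast h3, by exact_mod_cast h4⟩

lemma row_iff (p k : ℕ) (hp : 1 ≤ p) (hk : 0 < k) (x y : ℤ) :
    (0 ≤ y ∧ x + y ≤ (k:ℤ)*((p:ℤ)^2-p+1) ∧ -x + y ≤ (k:ℤ)*((p:ℤ)^2-p+1) ∧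
     ((p:ℤ)-1)*x + (p:ℤ)^2*y ≤ (k:ℤ)*((p:ℤ)*((p:ℤ)^2-p+1)) ∧
     -((p:ℤ)-1)*x + (p:ℤ)^2*y ≤ (k:ℤ)*((p:ℤ)*((p:ℤ)^2-p+1)))
    ↔ (0 ≤ y ∧ y ≤ ((k:ℤ)*((p:ℤ)^2-p+1))/(p:ℤ) ∧
       -(if y ≤ (k:ℤ) then (k:ℤ)*((p:ℤ)^2-p+1) - y
         else ((p:ℤ)*k*((p:ℤ)^2-p+1) - (p:ℤ)^2*y)/((p:ℤ)-1)) ≤ x ∧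
       x ≤ (if y ≤ (k:ℤ) then (k:ℤ)*((p:ℤ)^2-p+1) - y
         else ((p:ℤ)*k*((p:ℤ)^2-p+1) - (p:ℤ)^2*y)/((p:ℤ)-1))) := by
  set P : ℤ := (p:ℤ) with hPdef
  set K : ℤ := (k:ℤ) with hKdef
  have hP1 : 1 ≤ P := by rw [hPdef]; exact_mod_cast hp
  have hP0 : 0 < P := by linarith
  have hK1 : 1 ≤ K := by rw [hKdef]; exact_mod_cast hk
  have hq1 : 1 ≤ P^2 - P + 1 := by nlinarith
  constructor
  · rintro ⟨h0, h1, h2, h3, h4⟩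
    have hyY : y ≤ (K*(P^2-P+1))/P := by
      rw [Int.le_ediv_iff_mul_le hP0]
      nlinarith
    refine ⟨h0, hyY, ?_, ?_⟩ <;> split_ifs with hcase
    · -- y ≤ K, lower bound
      linarith
    · -- y > K, lower bound
      push_neg at hcase
      have hP2 : 2 ≤ P := by
        rcases (by omega : P = 1 ∨ 2 ≤ P) with h | h
        · exfalso
          rw [h] at hyY
          simp at hyY
          omega
        · exact h
      rw [neg_le, Int.le_ediv_iff_mul_le (by linarith : (0:ℤ) < P - 1)]
      nlinarith
    · linarith
    · push_neg at hcase
      have hP2 : 2 ≤ P := by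
        rcases (by omega : P = 1 ∨ 2 ≤ P) with h | h
        · exfalso
          rw [h] at hyY
          simp at hyY
          omega
        · exact h
      rw [Int.le_ediv_iff_mul_le (by linarith : (0:ℤ) < P - 1)]
      nlinarith
  · rintro ⟨h0, hyY, hlb, hub⟩
    have hPy : y * P ≤ K*(P^2-P+1) := (Int.le_ediv_iff_mul_le hP0).mp hyY
    split_ifs at hlb hub with hcase
    · -- y ≤ K
      have e3 : (P-1)*x ≤ (P-1)*(K*(P^2-P+1) - y) :=
        mul_le_mul_of_nonneg_left hub (by linarith)
      have e4 : (P-1)*(-x) ≤ (P-1)*(K*(P^2-P+1) - y) :=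
        mul_le_mul_of_nonneg_left (by linarith) (by linarith)
      have key : 0 ≤ (P^2-P+1)*(K - y) := mul_nonneg (by linarith) (by linarith)
      refine ⟨h0, by linarith, by linarith, by nlinarith, by nlinarith⟩
    · -- y > K
      push_neg at hcase
      have hP2 : 2 ≤ P := by
        rcases (by omega : P = 1 ∨ 2 ≤ P) with h | h
        · exfalso
          rw [h] at hyY
          simp at hyY
          omega
        · exact h
      have hub' : x * (P-1) ≤ P*K*(P^2-P+1) - P^2*y :=
        (Int.le_ediv_iff_mul_le (by linarith : (0:ℤ) < P - 1)).mp hub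
      have hlb' : -x * (P-1) ≤ P*K*(P^2-P+1) - P^2*y := by
        rw [neg_le] at hlb
        exact (Int.le_ediv_iff_mul_le (by linarith : (0:ℤ) < P - 1)).mp hlb
      have key : 0 ≤ (P^2-P+1)*(y - K) := mul_nonneg (by linarith) (by linarith)
      refine ⟨h0, by nlinarith, by nlinarith, by linarith, by linarith⟩

/-- row half-width -/
def wfun (p k : ℕ) (n : ℕ) : ℤ :=
  if (n:ℤ) ≤ (k:ℤ) then (k:ℤ)*((p:ℤ)^2-p+1) - n
  else ((p:ℤ)*k*((p:ℤ)^2-p+1) - (p:ℤ)^2*n)/((p:ℤ)-1)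


lemma Ydef (p k : ℕ) (hp : 1 ≤ p) :
    ((k*(p-1) + k/p : ℕ) : ℤ) = ((k:ℤ)*((p:ℤ)^2-p+1))/(p:ℤ) := by
  have hP0 : (0:ℤ) < (p:ℤ) := by exact_mod_cast hp
  have hsplit : (k:ℤ)*((p:ℤ)^2-p+1) = (k:ℤ) + ((k:ℤ)*((p:ℤ)-1)) * (p:ℤ) := by ring
  rw [hsplit, Int.add_mul_ediv_right _ _ (ne_of_gt hP0)]
  push_cast [Nat.cast_sub hp]
  exact add_comm _ _

lemma wfun_nonneg (p k : ℕ) (hp : 1 ≤ p) (hk : 0 < k) (n : ℕ)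
    (hn : (n:ℤ) ≤ ((k:ℤ)*((p:ℤ)^2-p+1))/(p:ℤ)) : 0 ≤ wfun p k n := by
  have hP1 : (1:ℤ) ≤ (p:ℤ) := by exact_mod_cast hp
  have hP0 : (0:ℤ) < (p:ℤ) := by linarith
  have hK1 : (1:ℤ) ≤ (k:ℤ) := by exact_mod_cast hk
  have hq1 : (1:ℤ) ≤ (p:ℤ)^2 - p + 1 := by nlinarith
  have hPy : (n:ℤ) * p ≤ (k:ℤ)*((p:ℤ)^2-p+1) := (Int.le_ediv_iff_mul_le hP0).mp hn
  rw [wfun]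
  split_ifs with hcase
  · have h0 : (0:ℤ) ≤ n := Int.ofNat_nonneg n
    nlinarith
  · push_neg at hcase
    apply Int.ediv_nonneg _ (by linarith)
    nlinarith

lemma pent_card (p k : ℕ) (hp : 1 ≤ p) (hk : 0 < k) :
    (ehr (pent p) k : ℤ) =
      ∑ n ∈ Finset.range (k*(p-1) + k/p + 1), (2 * wfun p k n + 1) := by
  set Yn : ℕ := k*(p-1) + k/p with hYn
  set F : Finset (ℤ×ℤ) := (Finset.range (Yn+1)).biUnion
    (fun n => (Finset.Icc (-(wfun p k n)) (wfun p k n)).image (fun x => (x, (n:ℤ)))) with hF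
  have hYcast : ((Yn:ℕ) : ℤ) = ((k:ℤ)*((p:ℤ)^2-p+1))/(p:ℤ) := Ydef p k hp
  have hset : {z : Fin 2 → ℤ | (fun i => (z i:ℝ)) ∈ (k:ℝ) • pent p} =
      (fun t : ℤ×ℤ => ![t.1, t.2]) '' ↑F := by
    ext z
    rw [mem_setOf_eq, mem_dilate_int p k hp hk, row_iff p k hp hk (z 0) (z 1)]
    constructor
    · rintro ⟨h0, hY, hlb, hub⟩
      refine ⟨(z 0, z 1), ?_, by funext i; fin_cases i <;> rfl⟩
      rw [hF]
      simp only [Finset.coe_biUnion, Set.mem_iUnion, Finset.mem_coe, Finset.mem_range,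
        Finset.mem_image, Finset.mem_Icc]
      refine ⟨(z 1).toNat, ?_, z 0, ?_, ?_⟩
      · rw [← hYcast] at hY; omega
      · have he : ((z 1).toNat : ℤ) = z 1 := Int.toNat_of_nonneg h0
        rw [wfun, he]
        exact ⟨hlb, hub⟩
      · rw [Int.toNat_of_nonneg h0]
    · rintro ⟨t, hmem, rfl⟩
      obtain ⟨x, yy⟩ := t
      rw [hF] at hmem
      simp only [Finset.coe_biUnion, Set.mem_iUnion, Finset.mem_coe, Finset.mem_range,
        Finset.mem_image, Finset.mem_Icc] at hmem
      obtain ⟨n, hn, x', ⟨hlb, hub⟩, he⟩ := hmem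
      have hx : x' = x := congrArg Prod.fst he
      have hy : ((n:ℕ) : ℤ) = yy := congrArg Prod.snd he
      rw [hx] at hlb hub
      beta_reduce
      have hz0 : (![x, yy] : Fin 2 → ℤ) 0 = x := rfl
      have hz1 : (![x, yy] : Fin 2 → ℤ) 1 = yy := rfl
      rw [hz0, hz1]
      rw [wfun, hy] at hlb hub
      refine ⟨by omega, ?_, hlb, hub⟩
      rw [← hYcast, ← hy]
      exact_mod_cast Nat.lt_succ_iff.mp hn
  have hinj : Function.Injective (fun t : ℤ×ℤ => (![t.1, t.2] : Fin 2 → ℤ)) := by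
    intro a b h
    exact Prod.ext (congrFun h 0) (congrFun h 1)
  have hdisj : ∀ a ∈ Finset.range (Yn+1), ∀ b ∈ Finset.range (Yn+1), a ≠ b →
      Disjoint ((Finset.Icc (-(wfun p k a)) (wfun p k a)).image (fun x => (x, (a:ℤ))))
        ((Finset.Icc (-(wfun p k b)) (wfun p k b)).image (fun x => (x, (b:ℤ)))) := by
    intro a _ b _ hab
    rw [Finset.disjoint_left]
    rintro t ht ht'
    simp only [Finset.mem_image, Finset.mem_Icc] at ht ht'
    obtain ⟨x1, _, rfl⟩ := ht
    obtain ⟨x2, _, he⟩ := ht'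
    have hba : (b:ℤ) = (a:ℤ) := congrArg Prod.snd he
    exact hab (by exact_mod_cast hba.symm)
  rw [ehr, hset, Set.ncard_image_of_injective _ hinj, Set.ncard_coe_finset, hF,
    Finset.card_biUnion hdisj]
  push_cast
  apply Finset.sum_congr rfl
  intro n hn
  rw [Finset.card_image_of_injective _ (fun a b h => congrArg Prod.fst h), Int.card_Icc]
  have hw : 0 ≤ wfun p k n := by
    apply wfun_nonneg p k hp hk
    rw [← hYcast]
    exact_mod_cast Nat.lt_succ_iff.mp (Finset.mem_range.mp hn)
  rw [show wfun p k n + 1 - -(wfun p k n) = 2 * wfun p k n + 1 by ring]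
  rw [Int.toNat_of_nonneg (by linarith)]

lemma sum_linear (a b : ℤ) (m : ℕ) :
    2 * ∑ n ∈ Finset.range m, (a + b*(n:ℤ)) = 2*m*a + b*(m:ℤ)*((m:ℤ)-1) := by
  induction m with
  | zero => simp
  | succ m ih =>
    rw [Finset.sum_range_succ, mul_add, ih]
    push_cast
    ring

lemma neg_succ_ediv (d : ℤ) (hd : 0 < d) (j : ℤ) (hj : 0 ≤ j) :
    (-(j+1))/d = -(j/d) - 1 := by
  have h := Int.mul_ediv_add_emod j d
  have h1 : 0 ≤ j % d := Int.emod_nonneg j (ne_of_gt hd)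
  have h2 : j % d < d := Int.emod_lt_of_pos j hd
  have : (-(j+1))/d = -(j/d) - 1 ∧ (-(j+1)) % d = d - (j % d) - 1 := by
    rw [Int.ediv_emod_unique hd]
    refine ⟨by linarith, by linarith, by linarith⟩
  exact this.1

lemma floorsum (d J : ℕ) :
    2 * (∑ i ∈ Finset.range J, ((i:ℤ)/(d:ℤ))) + (d:ℤ) * ((J:ℤ)/(d:ℤ)) =
      (d:ℤ) * ((J:ℤ)/(d:ℤ))^2 + 2*((J:ℤ)/(d:ℤ))*((J:ℤ)%(d:ℤ)) := by
  induction J with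
  | zero => simp
  | succ J ih =>
    rcases Nat.eq_zero_or_pos d with hd | hd
    · subst hd
      simp [Int.ediv_zero]
    have hd0 : (0:ℤ) < (d:ℤ) := by exact_mod_cast hd
    have h := Int.mul_ediv_add_emod (J:ℤ) (d:ℤ)
    have h1 : 0 ≤ (J:ℤ) % d := Int.emod_nonneg _ (ne_of_gt hd0)
    have h2 : (J:ℤ) % d < d := Int.emod_lt_of_pos _ hd0
    rw [Finset.sum_range_succ, mul_add]
    have hJ1 : ((J+1 : ℕ) : ℤ) = (J:ℤ) + 1 := by push_cast; ring
    rcases lt_or_eq_of_le (by linarith : (J:ℤ) % d + 1 ≤ d) with hc | hc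
    · -- remainder increments
      have hqr : ((J:ℤ)+1)/d = (J:ℤ)/d ∧ ((J:ℤ)+1) % d = (J:ℤ) % d + 1 := by
        rw [Int.ediv_emod_unique hd0]
        refine ⟨by linarith, by linarith, hc⟩
      rw [hJ1, hqr.1, hqr.2]
      linear_combination ih
    · -- rolls over
      have hqr : ((J:ℤ)+1)/d = (J:ℤ)/d + 1 ∧ ((J:ℤ)+1) % d = 0 := by
        rw [Int.ediv_emod_unique hd0]
        refine ⟨by linarith, by linarith, by linarith⟩
      rw [hJ1, hqr.1, hqr.2]
      linear_combination ih + (2*((J:ℤ)/(d:ℤ)))*hc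

lemma total (p k : ℕ) (hp : 1 ≤ p) (hk : 0 < k) :
    (∑ n ∈ Finset.range (k*(p-1) + k/p + 1), (2 * wfun p k n + 1)) + ((k/p : ℕ) : ℤ) + 1 =
      (p:ℤ)*((p:ℤ)^2-p+1)*(k:ℤ)^2 + (((p:ℤ)^2-p+1)+2)*(k:ℤ) + 2 := by
  have hkY : k ≤ k*(p-1) + k/p := by
    rcases Nat.lt_or_ge p 2 with h1 | h2
    · have hpe : p = 1 := by omega
      subst hpe
      simp
    · exact le_trans (Nat.le_mul_of_pos_right k (by omega)) (Nat.le_add_right _ _)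
  -- split the sum
  have hsplit : ∑ n ∈ Finset.range (k*(p-1) + k/p + 1), (2 * wfun p k n + 1) =
      (∑ n ∈ Finset.range (k+1), (2 * wfun p k n + 1)) +
      (∑ n ∈ Finset.Ico (k+1) (k*(p-1) + k/p + 1), (2 * wfun p k n + 1)) := by
    rw [Finset.range_eq_Ico, Finset.range_eq_Ico]
    exact (Finset.sum_Ico_consecutive (fun n : ℕ => (2 * wfun p k n + 1 : ℤ)) (Nat.zero_le _) (Nat.succ_le_succ hkY)).symm
  -- S1 closed form
  have hS1e : ∑ n ∈ Finset.range (k+1), (2 * wfun p k n + 1) =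
      ∑ n ∈ Finset.range (k+1), ((2*(k:ℤ)*((p:ℤ)^2-p+1)+1) + (-2)*(n:ℤ)) := by
    apply Finset.sum_congr rfl
    intro n hn
    rw [Finset.mem_range] at hn
    rw [wfun, if_pos (by exact_mod_cast Nat.lt_succ_iff.mp hn)]
    ring
  have h2S1 : 2 * ∑ n ∈ Finset.range (k+1), (2 * wfun p k n + 1) =
      2*((k:ℤ)+1)*(2*(k:ℤ)*((p:ℤ)^2-p+1)+1) + (-2)*((k:ℤ)+1)*(k:ℤ) := by
    rw [hS1e, sum_linear]
    push_cast
    ring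
  -- reindex S2
  have hS2r : ∑ n ∈ Finset.Ico (k+1) (k*(p-1) + k/p + 1), (2 * wfun p k n + 1) =
      ∑ j ∈ Finset.range (k*(p-1) + k/p - k), (2 * wfun p k (k+1+j) + 1) := by
    rw [Finset.sum_Ico_eq_sum_range]
    have h : k*(p-1) + k/p + 1 - (k+1) = k*(p-1) + k/p - k := by
      generalize k*(p-1) + k/p = Y
      omega
    rw [h]
  rcases Nat.lt_or_ge p 2 with hp1 | hp2
  · -- p = 1
    have hpe : p = 1 := by omega
    subst hpe
    have hJ0 : k*(1-1) + k/1 - k = 0 := by simp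
    rw [hsplit, hS2r, hJ0]
    simp only [Finset.range_zero, Finset.sum_empty, add_zero, Nat.div_one]
    refine mul_left_cancel₀ (two_ne_zero) ?_
    push_cast at h2S1 ⊢
    linear_combination h2S1
  · -- p ≥ 2
    have hP2 : (2:ℤ) ≤ (p:ℤ) := by exact_mod_cast hp2
    set P : ℤ := (p:ℤ) with hPdef
    set K : ℤ := (k:ℤ) with hKdef
    set M : ℤ := ((k/p : ℕ) : ℤ) with hMdef
    set R : ℤ := ((k%p : ℕ) : ℤ) with hRdef
    have hd0 : (0:ℤ) < P - 1 := by linarith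
    have hKe : P * M + R = K := by
      rw [hPdef, hKdef, hMdef, hRdef]
      exact_mod_cast Nat.div_add_mod k p
    have hR0 : 0 ≤ R := by rw [hRdef]; positivity
    have hRP : R < P := by
      rw [hRdef, hPdef]
      exact_mod_cast Nat.mod_lt k (by omega)
    set J : ℕ := k*(p-1) + k/p - k with hJdef
    have hJcast : (J:ℤ) = (P-1)*(K - M) - R := by
      rw [hJdef]
      have h1 : ((k*(p-1) + k/p - k : ℕ) : ℤ) = K*(P-1) + M - K := by
        rw [Nat.cast_sub hkY]
        push_cast [Nat.cast_sub hp]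
        rw [hPdef, hKdef, hMdef]
        push_cast
        ring
      rw [h1]
      linear_combination hKe
    -- per-term for S2
    have hterm : ∀ j ∈ Finset.range J, 2 * wfun p k (k+1+j) + 1 =
        ((2*P*K*(P-1) - 2*P - 3) + (-2*(P+1))*(j:ℤ)) + (-2)*((j:ℤ)/(P-1)) := by
      intro j _
      have hcond : ¬ (((k+1+j : ℕ):ℤ) ≤ (k:ℤ)) := by push_cast; omega
      rw [wfun, if_neg hcond]
      have hnum : (p:ℤ)*k*((p:ℤ)^2-p+1) - (p:ℤ)^2*((k+1+j : ℕ):ℤ) =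
          (-((j:ℤ)+1)) + (P-1) * (P*K*(P-1) - (P+1)*((j:ℤ)+1)) := by
        push_cast
        rw [hPdef, hKdef]
        ring
      rw [hnum, Int.add_mul_ediv_left _ _ (ne_of_gt hd0),
        neg_succ_ediv (P-1) hd0 (j:ℤ) (by positivity)]
      ring
    have hS2e : ∑ j ∈ Finset.range J, (2 * wfun p k (k+1+j) + 1) =
        (∑ j ∈ Finset.range J, ((2*P*K*(P-1) - 2*P - 3) + (-2*(P+1))*(j:ℤ)))
        + (-2) * (∑ j ∈ Finset.range J, ((j:ℤ)/(P-1))) := by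
      rw [Finset.mul_sum, ← Finset.sum_add_distrib]
      exact Finset.sum_congr rfl hterm
    have h2A : 2 * ∑ j ∈ Finset.range J, ((2*P*K*(P-1) - 2*P - 3) + (-2*(P+1))*(j:ℤ)) =
        2*(J:ℤ)*(2*P*K*(P-1) - 2*P - 3) + (-2*(P+1))*(J:ℤ)*((J:ℤ)-1) :=
      sum_linear _ _ J
    have hfs := floorsum (p-1) J
    have hdcast : (((p-1 : ℕ)):ℤ) = P - 1 := by
      rw [hPdef]; push_cast [Nat.cast_sub hp]; ring
    rw [hdcast] at hfs
    -- compute J / (P-1) and J % (P-1) by cases on R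
    rcases eq_or_lt_of_le hR0 with hr0 | hr1
    · -- R = 0
      have hqr : (J:ℤ)/(P-1) = K - M ∧ (J:ℤ) % (P-1) = 0 := by
        rw [Int.ediv_emod_unique hd0]
        refine ⟨by rw [hJcast]; linarith, le_refl 0, hd0⟩
      have h2g : 2 * (∑ j ∈ Finset.range J, ((j:ℤ)/(P-1))) =
          (P-1)*(K-M)^2 - (P-1)*(K-M) := by
        rw [hqr.1, hqr.2] at hfs
        linear_combination hfs
      rw [hsplit, hS2r, hS2e]
      refine mul_left_cancel₀ (two_ne_zero) ?_
      rw [← hr0] at hKe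
      rw [hJcast] at h2A
      rw [← hr0] at h2A
      rw [← hKe] at h2S1 h2A h2g ⊢
      linear_combination h2S1 + h2A + (-2)*h2g
    · -- R ≥ 1
      have hqr : (J:ℤ)/(P-1) = K - M - 1 ∧ (J:ℤ) % (P-1) = (P-1) - R := by
        rw [Int.ediv_emod_unique hd0]
        refine ⟨by rw [hJcast]; ring, by linarith, by linarith⟩
      have h2g : 2 * (∑ j ∈ Finset.range J, ((j:ℤ)/(P-1))) =
          (P-1)*(K-M-1)^2 + 2*(K-M-1)*((P-1)-R) - (P-1)*(K-M-1) := by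
        rw [hqr.1, hqr.2] at hfs
        linear_combination hfs
      rw [hsplit, hS2r, hS2e]
      refine mul_left_cancel₀ (two_ne_zero) ?_
      rw [hJcast] at h2A
      rw [← hKe] at h2S1 h2A h2g ⊢
      linear_combination h2S1 + h2A + (-2)*h2g


/-- `ehr_P(t) ≡ -ehr_ℓ(t)` for the pentagon `P` and segment `ℓ = [-1/p,0]`:
their Ehrhart functions sum to a polynomial. -/
theorem pentagon_complements_segment (p : ℕ) (hp : 1 ≤ p) :
    ∃ f : Polynomial ℚ, ∀ k : ℕ, 0 < k →
      (ehr (pent p) k : ℚ) + (ehr (seg p) k : ℚ) = f.eval (k : ℚ) := by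
  refine ⟨Polynomial.C ((p:ℚ)*((p:ℚ)^2-(p:ℚ)+1)) * Polynomial.X^2 +
    Polynomial.C ((p:ℚ)^2-(p:ℚ)+3) * Polynomial.X + Polynomial.C 2, ?_⟩
  intro k hk
  have hZ : (ehr (pent p) k : ℤ) + ((k/p + 1 : ℕ) : ℤ) =
      (p:ℤ)*((p:ℤ)^2-p+1)*(k:ℤ)^2 + (((p:ℤ)^2-p+1)+2)*(k:ℤ) + 2 := by
    rw [pent_card p k hp hk]
    have ht := total p k hp hk
    push_cast at ht ⊢
    linarith
  rw [ehr_seg p k hp hk]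
  have hQ := congrArg (fun z : ℤ => (z : ℚ)) hZ
  push_cast at hQ
  simp only [Polynomial.eval_add, Polynomial.eval_mul, Polynomial.eval_pow,
    Polynomial.eval_C, Polynomial.eval_X]
  push_cast
  have hcast2 : ((k / p : ℕ) : ℚ) = (((k:ℤ) / (p:ℤ) : ℤ) : ℚ) := by
    rw [show (k:ℤ)/(p:ℤ) = ((k/p : ℕ) : ℤ) from (Int.natCast_ediv k p).symm]
    exact (Int.cast_natCast _).symm
  linear_combination hQ + hcast2
end
end

section
/- If q(t) = Σ c_i(k)k^i and r(t) = Σ d_i(k)k^i are quasi-polynomials with q ≡ r (their difference is a polynomial), then for each i the minimum period of c_i equals the minimum period of d_i. -/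
open Set Pointwise

noncomputable section

lemma IsPeriodOf.mul_nat {c : ℤ → ℚ} {p : ℕ} (h : IsPeriodOf c p) (k : ℤ) (m : ℕ) :
    c (k + m * p) = c k := by
  induction m with
  | zero => simp
  | succ n ih =>
    have e : (k + ((n + 1 : ℕ) : ℤ) * p) = (k + (n : ℤ) * p) + p := by push_cast; ring
    rw [e, h.2, ih]

lemma IsPeriodOf.of_dvd {c : ℤ → ℚ} {p : ℕ} (h : IsPeriodOf c p) (L : ℕ) (hL : 0 < L)
    (hd : p ∣ L) : IsPeriodOf c L := by
  obtain ⟨m, rfl⟩ := hd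
  refine ⟨hL, fun k => ?_⟩
  have e : (((p * m : ℕ) : ℤ)) = (m : ℤ) * p := by push_cast; ring
  rw [e]
  exact h.mul_nat k m

/-- if two quasi-polynomials are equivalent modulo polynomials, then
their coefficient functions have the same minimum periods. -/
theorem equiv_quasiPolys_same_min_periods (N : ℕ) (c d : ℕ → ℤ → ℚ)
    (hc : ∀ i, ∃ p, IsPeriodOf (c i) p) (hd : ∀ i, ∃ p, IsPeriodOf (d i) p)
    (hequiv : ∃ f : Polynomial ℚ, ∀ k : ℤ,
      (∑ i ∈ Finset.range (N + 1), c i k * (k : ℚ) ^ i) -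
        (∑ i ∈ Finset.range (N + 1), d i k * (k : ℚ) ^ i) = f.eval (k : ℚ)) :
    ∀ i, i ≤ N → ∀ m : ℕ, (IsMinPeriod (c i) m ↔ IsMinPeriod (d i) m) := by
  obtain ⟨f, hf⟩ := hequiv
  classical
  -- choose periods
  set p : ℕ → ℕ := fun i => (hc i).choose with hp_def
  set q : ℕ → ℕ := fun i => (hd i).choose with hq_def
  have hp : ∀ i, IsPeriodOf (c i) (p i) := fun i => (hc i).choose_spec
  have hq : ∀ i, IsPeriodOf (d i) (q i) := fun i => (hd i).choose_spec
  set L : ℕ := ∏ i ∈ Finset.range (N + 1), (p i * q i) with hL_def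
  have hLpos : 0 < L := Finset.prod_pos (fun i _ => mul_pos (hp i).1 (hq i).1)
  have hcL : ∀ i ∈ Finset.range (N + 1), IsPeriodOf (c i) L := by
    intro i hi
    exact (hp i).of_dvd _ hLpos ((dvd_mul_right (p i) (q i)).trans
      (Finset.dvd_prod_of_mem _ hi))
  have hdL : ∀ i ∈ Finset.range (N + 1), IsPeriodOf (d i) L := by
    intro i hi
    exact (hq i).of_dvd _ hLpos ((dvd_mul_left (q i) (p i)).trans
      (Finset.dvd_prod_of_mem _ hi))
  -- key: c i r - d i r = f.coeff i for all r, i ≤ N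
  have key : ∀ i ∈ Finset.range (N + 1), ∀ r : ℤ, c i r - d i r = f.coeff i := by
    intro i hi r
    set g : Polynomial ℚ :=
      ∑ j ∈ Finset.range (N + 1), Polynomial.C (c j r - d j r) * Polynomial.X ^ j with hg_def
    have hgf : g = f := by
      apply Polynomial.eq_of_infinite_eval_eq
      have hinj : Function.Injective (fun m : ℕ => ((r + m * L : ℤ) : ℚ)) := by
        intro a b hab
        simp only at hab
        have : (a : ℚ) * L = (b : ℚ) * L := by push_cast at hab ⊢; linarith
        have hL' : (L : ℚ) ≠ 0 := by exact_mod_cast hLpos.ne'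
        exact_mod_cast mul_right_cancel₀ hL' this
      apply Set.Infinite.mono (s := Set.range (fun m : ℕ => ((r + m * L : ℤ) : ℚ)))
      · rintro x ⟨m, rfl⟩
        simp only [Set.mem_setOf_eq]
        have hck : ∀ j ∈ Finset.range (N + 1), c j (r + m * L) = c j r := by
          intro j hj
          exact (hcL j hj).mul_nat r m
        have hdk : ∀ j ∈ Finset.range (N + 1), d j (r + m * L) = d j r := by
          intro j hj
          exact (hdL j hj).mul_nat r m
        have hfk := hf (r + m * L)
        have e1 : ∑ j ∈ Finset.range (N + 1), c j (r + m * L) * ((r + m * L : ℤ) : ℚ) ^ j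
            = ∑ j ∈ Finset.range (N + 1), c j r * ((r + m * L : ℤ) : ℚ) ^ j :=
          Finset.sum_congr rfl fun j hj => by rw [hck j hj]
        have e2 : ∑ j ∈ Finset.range (N + 1), d j (r + m * L) * ((r + m * L : ℤ) : ℚ) ^ j
            = ∑ j ∈ Finset.range (N + 1), d j r * ((r + m * L : ℤ) : ℚ) ^ j :=
          Finset.sum_congr rfl fun j hj => by rw [hdk j hj]
        rw [e1, e2] at hfk
        rw [hg_def]
        simp only [Polynomial.eval_finset_sum, Polynomial.eval_mul, Polynomial.eval_C,
          Polynomial.eval_pow, Polynomial.eval_X]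
        rw [← hfk, ← Finset.sum_sub_distrib]
        apply Finset.sum_congr rfl
        intro j _
        ring
      · exact Set.infinite_range_of_injective hinj
    have : g.coeff i = c i r - d i r := by
      rw [hg_def, Polynomial.finset_sum_coeff]
      rw [Finset.sum_eq_single i]
      · rw [Polynomial.coeff_C_mul, Polynomial.coeff_X_pow, if_pos rfl, mul_one]
      · intro j _ hj
        rw [Polynomial.coeff_C_mul, Polynomial.coeff_X_pow, if_neg (Ne.symm hj), mul_zero]
      · intro h; exact absurd hi h
    rw [← hgf, this]
  -- hence d i k = c i k - f.coeff i, so same periods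
  intro i hi m
  have hconst : ∀ k : ℤ, d i k = c i k - f.coeff i := by
    intro k
    have := key i (Finset.mem_range.mpr (Nat.lt_succ_of_le hi)) k
    linarith
  have hper : ∀ m : ℕ, IsPeriodOf (c i) m ↔ IsPeriodOf (d i) m := by
    intro m
    constructor
    · rintro ⟨hm, h⟩
      exact ⟨hm, fun k => by rw [hconst, hconst, h]⟩
    · rintro ⟨hm, h⟩
      refine ⟨hm, fun k => ?_⟩
      have := h k
      rw [hconst, hconst] at this
      linarith
  constructor
  · rintro ⟨h1, h2⟩
    exact ⟨(hper m).mp h1, fun m' hm' => h2 m' ((hper m').mpr hm')⟩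
  · rintro ⟨h1, h2⟩
    exact ⟨(hper m).mpr h1, fun m' hm' => h2 m' ((hper m').mp hm')⟩
end
end
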